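/- Let Z ⊆ Y ⊆ X be closed subspaces of a real Banach space X. If Z has property-(HB) in X, then Z has property-(HB) in Y. -/

import Mathlib

open NormedSpace Metric Set

namespace Paper

variable {X : Type*} [NormedAddCommGroup X] [NormedSpace ℝ X]

/-- The restriction of a continuous linear functional to a subspace. -/
noncomputable def restr (Y : Submodule ℝ X) (f : StrongDual ℝ X) : StrongDual ℝ ↥Y :=
  f.comp Y.subtypeL

/-- The annihilator `Y⊥` of a subspace `Y` in the dual. -/
def ann (Y : Submodule ℝ X) : Set (StrongDual ℝ X) := {f | ∀ y ∈ Y, f y = 0}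

/-- The set of norm-preserving (Hahn–Banach) extensions of `g : Y* ` to `X`. -/
def HB (Y : Submodule ℝ X) (g : StrongDual ℝ ↥Y) : Set (StrongDual ℝ X) :=
  {f | (∀ y : Y, f (y : X) = g y) ∧ ‖f‖ = ‖g‖}

/-- Best approximations to `x` from a set `A`. -/
def bestApprox {E : Type*} [NormedAddCommGroup E] (A : Set E) (x : E) : Set E :=
  {z ∈ A | ‖x - z‖ = infDist x A}

/-- Property-(U): every functional on `Y` has a unique norm-preserving extension to `X`. -/
def propU (Y : Submodule ℝ X) : Prop :=
  ∀ g : StrongDual ℝ ↥Y, ∃! f : StrongDual ℝ X, f ∈ HB Y g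

/-- `Y# `: the set of functionals whose norm equals the norm of their restriction to `Y`. -/
def sharp (Y : Submodule ℝ X) : Set (StrongDual ℝ X) := {f | ‖f‖ = ‖restr Y f‖}

/-- Property-(HB), stated via the decomposition `X* = Y# ⊕ Y⊥`. -/
def propHB (Y : Submodule ℝ X) : Prop :=
  (∀ f ∈ sharp Y, ∀ g ∈ sharp Y, f + g ∈ sharp Y) ∧
  (∀ (c : ℝ), ∀ f ∈ sharp Y, c • f ∈ sharp Y) ∧
  (∀ f : StrongDual ℝ X, ∃ g ∈ sharp Y, ∃ h ∈ ann Y, f = g + h) ∧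
  (∀ g ∈ sharp Y, ∀ h ∈ ann Y, h ≠ 0 → ‖g‖ < ‖g + h‖ ∧ ‖h‖ ≤ ‖g + h‖)

end Paper

open Paper

section Aux

variable {X : Type*} [NormedAddCommGroup X] [NormedSpace ℝ X]

lemma restr_add (W : Submodule ℝ X) (f g : StrongDual ℝ X) :
    restr W (f + g) = restr W f + restr W g := by ext w; simp [restr]

lemma restr_smul (W : Submodule ℝ X) (c : ℝ) (f : StrongDual ℝ X) :
    restr W (c • f) = c • restr W f := by ext w; simp [restr]

lemma restr_norm_le (W : Submodule ℝ X) (f : StrongDual ℝ X) : ‖restr W f‖ ≤ ‖f‖ := by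
  apply ContinuousLinearMap.opNorm_le_bound _ (norm_nonneg f)
  intro w
  exact f.le_opNorm (w : X)

lemma norm_restr_map (Y : Submodule ℝ X) (Z : Submodule ℝ ↥Y) (F : StrongDual ℝ X) :
    ‖restr (Z.map Y.subtype) F‖ = ‖restr Z (restr Y F)‖ := by
  apply le_antisymm
  · apply ContinuousLinearMap.opNorm_le_bound _ (norm_nonneg (restr Z (restr Y F)))
    rintro ⟨x, hx⟩
    obtain ⟨z, hz, rfl⟩ := hx
    exact (restr Z (restr Y F)).le_opNorm (⟨z, hz⟩ : Z)
  · apply ContinuousLinearMap.opNorm_le_bound _ (norm_nonneg (restr (Z.map Y.subtype) F))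
    intro z
    exact (restr (Z.map Y.subtype) F).le_opNorm
      (⟨Y.subtype z, ⟨z, z.2, rfl⟩⟩ : Z.map Y.subtype)

end Aux

set_option maxHeartbeats 1000000
set_option synthInstance.maxHeartbeats 400000

/-- if `Z ⊆ Y ⊆ X` are closed subspaces and `Z` has property-(HB) in `X`,
then `Z` has property-(HB) in `Y`. -/
theorem stmt11 {X : Type*} [NormedAddCommGroup X] [NormedSpace ℝ X] [CompleteSpace X]
    (Y : Submodule ℝ X) (hYc : IsClosed (Y : Set X))
    (Z : Submodule ℝ ↥Y) (hZc : IsClosed (Z : Set ↥Y))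
    (hHB : propHB (Z.map Y.subtype)) :
    propHB Z := by
  set Z' := Z.map Y.subtype with hZ'def
  -- norm-preserving extension with restriction equality
  have ext : ∀ f : StrongDual ℝ ↥Y, ∃ F : StrongDual ℝ X, restr Y F = f ∧ ‖F‖ = ‖f‖ := by
    intro f
    obtain ⟨F, hF1, hF2⟩ := exists_extension_norm_eq Y f
    exact ⟨F, ContinuousLinearMap.ext fun y => hF1 y, hF2⟩
  -- extensions of sharp functionals are sharp
  have sharpext : ∀ f : StrongDual ℝ ↥Y, f ∈ sharp Z →
      ∀ F : StrongDual ℝ X, restr Y F = f → ‖F‖ = ‖f‖ → F ∈ sharp Z' := by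
    intro f hf F hFr hFn
    show ‖F‖ = ‖restr Z' F‖
    rw [norm_restr_map, hFr, hFn]
    exact hf
  -- restriction of sharp Z' functional is sharp Z with same norm
  have sharpres : ∀ G : StrongDual ℝ X, G ∈ sharp Z' →
      restr Y G ∈ sharp Z ∧ ‖restr Y G‖ = ‖G‖ := by
    intro G hG
    have h1 : ‖restr Z (restr Y G)‖ = ‖G‖ := by rw [← norm_restr_map]; exact hG.symm
    have h2 : ‖restr Y G‖ = ‖G‖ :=
      le_antisymm (restr_norm_le Y G) (h1 ▸ restr_norm_le Z (restr Y G))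
    exact ⟨h2.trans h1.symm, h2⟩
  -- restriction of annihilator
  have annres : ∀ H : StrongDual ℝ X, H ∈ ann Z' → restr Y H ∈ ann Z := by
    intro H hH z hz
    exact hH (z : X) ⟨z, hz, rfl⟩
  -- part 1
  have part1 : ∀ f ∈ sharp Z, ∀ g ∈ sharp Z, f + g ∈ sharp Z := by
    intro f hf g hg
    obtain ⟨F, hFr, hFn⟩ := ext f
    obtain ⟨G, hGr, hGn⟩ := ext g
    have hF : F ∈ sharp Z' := sharpext f hf F hFr hFn
    have hG : G ∈ sharp Z' := sharpext g hg G hGr hGn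
    have hFG : F + G ∈ sharp Z' := hHB.1 F hF G hG
    have hres : restr Y (F + G) = f + g := by rw [restr_add, hFr, hGr]
    show ‖f + g‖ = ‖restr Z (f + g)‖
    refine le_antisymm ?_ (restr_norm_le Z (f + g))
    calc ‖f + g‖ ≤ ‖F + G‖ := hres ▸ restr_norm_le Y (F + G)
      _ = ‖restr Z' (F + G)‖ := hFG
      _ = ‖restr Z (restr Y (F + G))‖ := norm_restr_map Y Z (F + G)
      _ = ‖restr Z (f + g)‖ := by rw [hres]
  -- part 2
  have part2 : ∀ (c : ℝ), ∀ f ∈ sharp Z, c • f ∈ sharp Z := by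
    intro c f hf
    show ‖c • f‖ = ‖restr Z (c • f)‖
    haveI : NormSMulClass ℝ (StrongDual ℝ ↥Y) := @NormedSpace.toNormSMulClass ℝ (StrongDual ℝ ↥Y) _ _ _
    haveI : NormSMulClass ℝ (StrongDual ℝ ↥Z) := @NormedSpace.toNormSMulClass ℝ (StrongDual ℝ ↥Z) _ _ _
    rw [restr_smul, norm_smul, norm_smul]
    exact congrArg (|c| * ·) hf
  -- sharp functionals agreeing on Z are equal
  have sharpuniq : ∀ f ∈ sharp Z, ∀ g ∈ sharp Z, restr Z f = restr Z g → f = g := by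
    intro f hf g hg hfg
    have h1 : f + (-1 : ℝ) • g ∈ sharp Z := part1 f hf _ (part2 (-1) g hg)
    have h2 : ‖f + (-1 : ℝ) • g‖ = 0 := by
      rw [h1, restr_add, restr_smul, hfg]
      have h0 : restr Z g + (-1 : ℝ) • restr Z g = 0 := by ext z; simp
      rw [h0]; exact ContinuousLinearMap.opNorm_zero
    have h3 : f + (-1 : ℝ) • g = 0 := norm_eq_zero.mp h2
    have : f - g = 0 := by rw [sub_eq_add_neg, ← neg_one_smul ℝ g]; exact h3
    exact sub_eq_zero.mp this
  refine ⟨part1, part2, ?_, ?_⟩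
  -- part 3: decomposition
  · intro f
    obtain ⟨F, hFr, hFn⟩ := ext f
    obtain ⟨G, hG, H, hH, hFGH⟩ := hHB.2.2.1 F
    refine ⟨restr Y G, (sharpres G hG).1, restr Y H, annres H hH, ?_⟩
    rw [← restr_add, ← hFGH, hFr]
  -- part 4: norm inequalities
  · intro g hg h hh hne
    obtain ⟨F, hFr, hFn⟩ := ext (g + h)
    obtain ⟨G, hG, H, hH, hFGH⟩ := hHB.2.2.1 F
    have hg1 := sharpres G hG
    have hh1 := annres H hH
    have hsum : restr Y G + restr Y H = g + h := by rw [← restr_add, ← hFGH, hFr]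
    -- g and restr Y G agree on Z
    have hZeq : restr Z g = restr Z (restr Y G) := by
      ext z
      have e1 : restr Z h z = 0 := hh z z.2
      have e2 : restr Z (restr Y H) z = 0 := hh1 z z.2
      have := congrArg (fun u : StrongDual ℝ ↥Y => restr Z u z) hsum
      simp only [restr_add] at this
      simp only [ContinuousLinearMap.add_apply, e1, e2, add_zero] at this
      exact this.symm
    have hgeq : g = restr Y G := sharpuniq g hg (restr Y G) hg1.1 hZeq
    have hheq : h = restr Y H := by
      have := hsum
      rw [← hgeq] at this
      exact (add_left_cancel this).symm
    have hHne : H ≠ 0 := by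
      intro h0
      apply hne
      rw [hheq, h0]
      ext y; simp [restr]
    obtain ⟨hlt, hle⟩ := hHB.2.2.2 G hG H hH hHne
    rw [← hFGH] at hlt hle
    constructor
    · calc ‖g‖ = ‖G‖ := by rw [hgeq, hg1.2]
        _ < ‖F‖ := hlt
        _ = ‖g + h‖ := hFn
    · calc ‖h‖ = ‖restr Y H‖ := by rw [hheq]
        _ ≤ ‖H‖ := restr_norm_le Y H
        _ ≤ ‖F‖ := hle
        _ = ‖g + h‖ := hFn
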